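/- Let p: E → [1,∞] and p': E → [1,∞] be measurable with 1/p(x) + 1/p'(x) = 1 a.e. If f ∈ L^{p(·)}(E) and g ∈ L^{p'(·)}(E), then fg ∈ L^1(E) and ∫_E |f g| dx ≤ 4‖f‖_{L^{p(·)}(E)}‖g‖_{L^{p'(·)}(E)}. -/

import Mathlib

open MeasureTheory ENNReal

/-- The variable Lebesgue norm `‖f‖_{L^{p(·)}(E)}` for an exponent function
`p : E → [1,∞]`, with modular
`ρ(h) = ∫_{E∖E_∞} |h|^{p(x)} dx + ‖h‖_{L^∞(E_∞)}` where `E_∞ = {p = ∞}`. -/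
noncomputable def vNormE {d : ℕ} (E : Set (EuclideanSpace ℝ (Fin d)))
    (p : EuclideanSpace ℝ (Fin d) → ℝ≥0∞)
    (f : EuclideanSpace ℝ (Fin d) → ℝ) : ℝ≥0∞ :=
  sInf {t : ℝ≥0∞ | 0 < t ∧
    (∫⁻ x in E ∩ {x | p x ≠ ⊤}, ((‖f x‖₊ : ℝ≥0∞) / t) ^ (p x).toReal) +
      essSup (fun x => (‖f x‖₊ : ℝ≥0∞) / t)
        (volume.restrict (E ∩ {x | p x = ⊤})) ≤ 1}

/-- The modular associated with `vNormE`. -/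
noncomputable def modE {d : ℕ} (E : Set (EuclideanSpace ℝ (Fin d)))
    (p : EuclideanSpace ℝ (Fin d) → ℝ≥0∞)
    (f : EuclideanSpace ℝ (Fin d) → ℝ) (t : ℝ≥0∞) : ℝ≥0∞ :=
  (∫⁻ x in E ∩ {x | p x ≠ ⊤}, ((‖f x‖₊ : ℝ≥0∞) / t) ^ (p x).toReal) +
    essSup (fun x => (‖f x‖₊ : ℝ≥0∞) / t)
      (volume.restrict (E ∩ {x | p x = ⊤}))

lemma vNormE_eq_modE {d : ℕ} (E : Set (EuclideanSpace ℝ (Fin d)))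
    (p : EuclideanSpace ℝ (Fin d) → ℝ≥0∞) (f : EuclideanSpace ℝ (Fin d) → ℝ) :
    vNormE E p f = sInf {t : ℝ≥0∞ | 0 < t ∧ modE E p f t ≤ 1} := rfl

lemma modE_mono {d : ℕ} (E : Set (EuclideanSpace ℝ (Fin d)))
    (p : EuclideanSpace ℝ (Fin d) → ℝ≥0∞) (f : EuclideanSpace ℝ (Fin d) → ℝ)
    {s t : ℝ≥0∞} (hst : s ≤ t) : modE E p f t ≤ modE E p f s := by
  unfold modE
  refine add_le_add ?_ ?_
  · refine lintegral_mono fun x => ?_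
    exact ENNReal.rpow_le_rpow (ENNReal.div_le_div_left hst _) ENNReal.toReal_nonneg
  · exact essSup_mono_ae (Filter.Eventually.of_forall fun x => ENNReal.div_le_div_left hst _)

lemma modE_le_one_of_lt {d : ℕ} {E : Set (EuclideanSpace ℝ (Fin d))}
    {p : EuclideanSpace ℝ (Fin d) → ℝ≥0∞} {f : EuclideanSpace ℝ (Fin d) → ℝ}
    {t : ℝ≥0∞} (ht : vNormE E p f < t) : modE E p f t ≤ 1 := by
  rw [vNormE_eq_modE] at ht
  obtain ⟨s, hs, hst⟩ := sInf_lt_iff.mp ht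
  exact (modE_mono E p f hst.le).trans hs.2

/-- Young's inequality for `ℝ≥0∞`-valued conjugate exponents, with constant dropped. -/
lemma auxYoung {q q' : ℝ≥0∞} (hq : q ≠ ⊤) (hq' : q' ≠ ⊤) (h : q⁻¹ + q'⁻¹ = 1)
    (a b : ℝ≥0∞) : a * b ≤ a ^ q.toReal + b ^ q'.toReal := by
  have hq0 : q ≠ 0 := by
    intro h0; rw [h0] at h; simp at h
  have hq'0 : q' ≠ 0 := by
    intro h0; rw [h0] at h; simp at h
  have hlt : ∀ {u v : ℝ≥0∞}, u ≠ ⊤ → v ≠ ⊤ → u⁻¹ + v⁻¹ = 1 → 1 < u := by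
    intro u v hu hv huv
    by_contra hle
    push_neg at hle
    have h1 : (1 : ℝ≥0∞) ≤ u⁻¹ := ENNReal.one_le_inv.2 hle
    have h2 : v⁻¹ ≠ 0 := ENNReal.inv_ne_zero.2 hv
    have : (1 : ℝ≥0∞) < u⁻¹ + v⁻¹ :=
      lt_of_lt_of_le (ENNReal.lt_add_right one_ne_top h2) (add_le_add_left h1 _)
    rw [huv] at this; exact lt_irrefl _ this
  have h1q : 1 < q := hlt hq hq' h
  have h1q' : 1 < q' := hlt hq' hq (by rw [add_comm]; exact h)
  have hconjR : (q.toReal).HolderConjugate (q'.toReal) := by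
    rw [Real.holderConjugate_iff]
    constructor
    · have := (ENNReal.toReal_lt_toReal one_ne_top hq).mpr h1q
      simpa using this
    · rw [← ENNReal.toReal_inv, ← ENNReal.toReal_inv,
        ← ENNReal.toReal_add (ENNReal.inv_ne_top.2 hq0) (ENNReal.inv_ne_top.2 hq'0), h,
        ENNReal.toReal_one]
  calc a * b ≤ a ^ q.toReal / ENNReal.ofReal q.toReal +
        b ^ q'.toReal / ENNReal.ofReal q'.toReal := ENNReal.young_inequality a b hconjR
    _ ≤ a ^ q.toReal + b ^ q'.toReal := by
        refine add_le_add ?_ ?_ <;>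
        · rw [ENNReal.div_eq_inv_mul]
          refine mul_le_of_le_one_left (zero_le) ?_
          rw [ENNReal.inv_le_one]
          exact ENNReal.one_le_ofReal.2 (by
            first
            | exact le_of_lt (by simpa using (ENNReal.toReal_lt_toReal one_ne_top hq).mpr h1q)
            | exact le_of_lt (by simpa using (ENNReal.toReal_lt_toReal one_ne_top hq').mpr h1q'))

lemma holder_key {d : ℕ} (E : Set (EuclideanSpace ℝ (Fin d))) (hE : MeasurableSet E)
    (p p' : EuclideanSpace ℝ (Fin d) → ℝ≥0∞)
    (hp : Measurable p) (hp' : Measurable p')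
    (hconj : ∀ᵐ x ∂(volume.restrict E), (p x)⁻¹ + (p' x)⁻¹ = 1)
    (f g : EuclideanSpace ℝ (Fin d) → ℝ) (hf : Measurable f) (hg : Measurable g)
    {s t : ℝ≥0∞} (hs0 : s ≠ 0) (hs : s ≠ ⊤) (ht0 : t ≠ 0) (ht : t ≠ ⊤)
    (hms : modE E p f s ≤ 1) (hmt : modE E p' g t ≤ 1) :
    ∫⁻ x in E, ‖f x * g x‖₊ ≤ 4 * s * t := by
  set F : EuclideanSpace ℝ (Fin d) → ℝ≥0∞ := fun x => (‖f x‖₊ : ℝ≥0∞) / s with hF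
  set G : EuclideanSpace ℝ (Fin d) → ℝ≥0∞ := fun x => (‖g x‖₊ : ℝ≥0∞) / t with hG
  have hmeasF : Measurable F := hf.nnnorm.coe_nnreal_ennreal.div_const s
  have hmeasG : Measurable G := hg.nnnorm.coe_nnreal_ennreal.div_const t
  have hmp : MeasurableSet {x | p x = ⊤} := hp (measurableSet_singleton ⊤)
  have hmp' : MeasurableSet {x | p' x = ⊤} := hp' (measurableSet_singleton ⊤)
  -- the three pieces
  set S1 : Set (EuclideanSpace ℝ (Fin d)) := E ∩ ({x | p x ≠ ⊤} ∩ {x | p' x ≠ ⊤}) with hS1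
  set S2 : Set (EuclideanSpace ℝ (Fin d)) := E ∩ {x | p x = ⊤} with hS2
  set S3 : Set (EuclideanSpace ℝ (Fin d)) := E ∩ {x | p' x = ⊤} with hS3
  have hms1 : (∫⁻ x in E ∩ {x | p x ≠ ⊤}, F x ^ (p x).toReal) ≤ 1 := le_self_add.trans hms
  have hms2 : essSup F (volume.restrict S2) ≤ 1 := le_add_self.trans hms
  have hmt1 : (∫⁻ x in E ∩ {x | p' x ≠ ⊤}, G x ^ (p' x).toReal) ≤ 1 := le_self_add.trans hmt
  have hmt2 : essSup G (volume.restrict S3) ≤ 1 := le_add_self.trans hmt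
  -- the bad (null) set
  set T : Set (EuclideanSpace ℝ (Fin d)) := E ∩ {x | (p x)⁻¹ + (p' x)⁻¹ ≠ 1} with hT
  have hTnull : volume T = 0 := by
    have h := (ae_restrict_iff' hE).mp hconj
    rw [ae_iff] at h
    have : {a | ¬(a ∈ E → (p a)⁻¹ + (p' a)⁻¹ = 1)} = T := by
      ext x; simp [hT, Set.mem_setOf_eq, _root_.not_imp, Set.mem_inter_iff]
    rwa [this] at h
  have hTint : ∀ h : EuclideanSpace ℝ (Fin d) → ℝ≥0∞, (∫⁻ x in T, h x) = 0 :=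
    fun h => setLIntegral_measure_zero T h hTnull
  -- bound on S1
  have hb1 : (∫⁻ x in S1, F x * G x) ≤ 2 := by
    have hae1 : ∀ᵐ x ∂volume.restrict S1,
        F x * G x ≤ F x ^ (p x).toReal + G x ^ (p' x).toReal := by
      have hc := ae_restrict_of_ae_restrict_of_subset (show S1 ⊆ E from fun x hx => hx.1) hconj
      have hm := ae_restrict_mem (μ := volume) (hE.inter (hmp.compl.inter hmp'.compl))
      filter_upwards [hc, hm] with x hx1 hx2
      exact auxYoung hx2.2.1 hx2.2.2 hx1 (F x) (G x)
    calc (∫⁻ x in S1, F x * G x)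
        ≤ ∫⁻ x in S1, (F x ^ (p x).toReal + G x ^ (p' x).toReal) := lintegral_mono_ae hae1
      _ = (∫⁻ x in S1, F x ^ (p x).toReal) + ∫⁻ x in S1, G x ^ (p' x).toReal :=
          lintegral_add_left (hmeasF.pow hp.ennreal_toReal) _
      _ ≤ 1 + 1 := by
          refine add_le_add ?_ ?_
          · exact (lintegral_mono_set (by intro x hx; exact ⟨hx.1, hx.2.1⟩)).trans hms1
          · exact (lintegral_mono_set (by intro x hx; exact ⟨hx.1, hx.2.2⟩)).trans hmt1
      _ = 2 := one_add_one_eq_two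
  -- bound on S2
  have hb2 : (∫⁻ x in S2, F x * G x) ≤ 1 := by
    have hae2 : ∀ᵐ x ∂volume.restrict S2, p' x = 1 := by
      have hc := ae_restrict_of_ae_restrict_of_subset (show S2 ⊆ E from fun x hx => hx.1) hconj
      have hm := ae_restrict_mem (μ := volume) (hE.inter hmp)
      filter_upwards [hc, hm] with x hx1 hx2
      have hxp : p x = ⊤ := hx2.2
      rw [hxp] at hx1
      simp only [ENNReal.inv_top, zero_add] at hx1
      exact ENNReal.inv_eq_one.mp hx1
    have haeF : ∀ᵐ x ∂volume.restrict S2, F x ≤ 1 :=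
      (ae_le_essSup F).mono fun x hx => hx.trans hms2
    have hstep : ∀ᵐ x ∂volume.restrict S2, F x * G x ≤ G x ^ (p' x).toReal := by
      filter_upwards [hae2, haeF] with x h1 h2
      have : F x * G x ≤ G x := by
        calc F x * G x ≤ 1 * G x := mul_le_mul_left h2 _
          _ = G x := one_mul _
      rw [h1]
      simpa using this
    have hsub : S2 ⊆ (E ∩ {x | p' x ≠ ⊤}) ∪ T := by
      intro x hx
      by_cases hcx : (p x)⁻¹ + (p' x)⁻¹ = 1
      · left
        refine ⟨hx.1, ?_⟩
        have hxp : p x = ⊤ := hx.2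
        rw [hxp] at hcx
        simp only [ENNReal.inv_top, zero_add] at hcx
        have := ENNReal.inv_eq_one.mp hcx
        simp [this]
      · right; exact ⟨hx.1, hcx⟩
    calc (∫⁻ x in S2, F x * G x)
        ≤ ∫⁻ x in S2, G x ^ (p' x).toReal := lintegral_mono_ae hstep
      _ ≤ ∫⁻ x in (E ∩ {x | p' x ≠ ⊤}) ∪ T, G x ^ (p' x).toReal := lintegral_mono_set hsub
      _ ≤ (∫⁻ x in E ∩ {x | p' x ≠ ⊤}, G x ^ (p' x).toReal) + ∫⁻ x in T, G x ^ (p' x).toReal :=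
          lintegral_union_le _ _ _
      _ ≤ 1 + 0 := add_le_add hmt1 (le_of_eq (hTint _))
      _ = 1 := by rw [add_zero]
  -- bound on S3
  have hb3 : (∫⁻ x in S3, F x * G x) ≤ 1 := by
    have hae3 : ∀ᵐ x ∂volume.restrict S3, p x = 1 := by
      have hc := ae_restrict_of_ae_restrict_of_subset (show S3 ⊆ E from fun x hx => hx.1) hconj
      have hm := ae_restrict_mem (μ := volume) (hE.inter hmp')
      filter_upwards [hc, hm] with x hx1 hx2
      have hxp : p' x = ⊤ := hx2.2
      rw [hxp] at hx1
      simp only [ENNReal.inv_top, add_zero] at hx1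
      exact ENNReal.inv_eq_one.mp hx1
    have haeG : ∀ᵐ x ∂volume.restrict S3, G x ≤ 1 :=
      (ae_le_essSup G).mono fun x hx => hx.trans hmt2
    have hstep : ∀ᵐ x ∂volume.restrict S3, F x * G x ≤ F x ^ (p x).toReal := by
      filter_upwards [hae3, haeG] with x h1 h2
      have : F x * G x ≤ F x := by
        calc F x * G x ≤ F x * 1 := mul_le_mul_right h2 _
          _ = F x := mul_one _
      rw [h1]
      simpa using this
    have hsub : S3 ⊆ (E ∩ {x | p x ≠ ⊤}) ∪ T := by
      intro x hx
      by_cases hcx : (p x)⁻¹ + (p' x)⁻¹ = 1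
      · left
        refine ⟨hx.1, ?_⟩
        have hxp : p' x = ⊤ := hx.2
        rw [hxp] at hcx
        simp only [ENNReal.inv_top, add_zero] at hcx
        have := ENNReal.inv_eq_one.mp hcx
        simp [this]
      · right; exact ⟨hx.1, hcx⟩
    calc (∫⁻ x in S3, F x * G x)
        ≤ ∫⁻ x in S3, F x ^ (p x).toReal := lintegral_mono_ae hstep
      _ ≤ ∫⁻ x in (E ∩ {x | p x ≠ ⊤}) ∪ T, F x ^ (p x).toReal := lintegral_mono_set hsub
      _ ≤ (∫⁻ x in E ∩ {x | p x ≠ ⊤}, F x ^ (p x).toReal) + ∫⁻ x in T, F x ^ (p x).toReal :=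
          lintegral_union_le _ _ _
      _ ≤ 1 + 0 := add_le_add hms1 (le_of_eq (hTint _))
      _ = 1 := by rw [add_zero]
  -- covering
  have hcover : E ⊆ S1 ∪ (S2 ∪ S3) := by
    intro x hx
    by_cases h1 : p x = ⊤
    · exact Or.inr (Or.inl ⟨hx, h1⟩)
    by_cases h2 : p' x = ⊤
    · exact Or.inr (Or.inr ⟨hx, h2⟩)
    exact Or.inl ⟨hx, h1, h2⟩
  have htotal : (∫⁻ x in E, F x * G x) ≤ 4 := by
    calc (∫⁻ x in E, F x * G x)
        ≤ ∫⁻ x in S1 ∪ (S2 ∪ S3), F x * G x := lintegral_mono_set hcover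
      _ ≤ (∫⁻ x in S1, F x * G x) + ∫⁻ x in S2 ∪ S3, F x * G x := lintegral_union_le _ _ _
      _ ≤ (∫⁻ x in S1, F x * G x) +
          ((∫⁻ x in S2, F x * G x) + ∫⁻ x in S3, F x * G x) :=
          add_le_add_right (lintegral_union_le _ _ _) _
      _ ≤ 2 + (1 + 1) := add_le_add hb1 (add_le_add hb2 hb3)
      _ = 4 := by norm_num
  have heq : (∫⁻ x in E, (‖f x * g x‖₊ : ℝ≥0∞)) = s * t * ∫⁻ x in E, F x * G x := by
    rw [← lintegral_const_mul' _ _ (ENNReal.mul_ne_top hs ht)]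
    refine lintegral_congr fun x => ?_
    simp only [nnnorm_mul, ENNReal.coe_mul, hF, hG]
    rw [mul_mul_mul_comm s t _ _, ENNReal.mul_div_cancel hs0 hs,
      ENNReal.mul_div_cancel ht0 ht]
  calc (∫⁻ x in E, (‖f x * g x‖₊ : ℝ≥0∞)) = s * t * ∫⁻ x in E, F x * G x := heq
    _ ≤ s * t * 4 := mul_le_mul_right htotal _
    _ = 4 * s * t := by ring

/-- Hölder's inequality for variable exponents: if `1/p(x) + 1/p'(x) = 1` a.e.,
`f ∈ L^{p(·)}(E)` and `g ∈ L^{p'(·)}(E)`, then `fg ∈ L¹(E)` and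
`∫_E |fg| dx ≤ 4 ‖f‖_{L^{p(·)}(E)} ‖g‖_{L^{p'(·)}(E)}`. -/
theorem stmt17 {d : ℕ} (E : Set (EuclideanSpace ℝ (Fin d))) (hE : MeasurableSet E)
    (p p' : EuclideanSpace ℝ (Fin d) → ℝ≥0∞)
    (hp : Measurable p) (hp' : Measurable p')
    (hconj : ∀ᵐ x ∂(volume.restrict E), (p x)⁻¹ + (p' x)⁻¹ = 1)
    (f g : EuclideanSpace ℝ (Fin d) → ℝ) (hf : Measurable f) (hg : Measurable g)
    (hfLp : vNormE E p f < ⊤) (hgLp : vNormE E p' g < ⊤) :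
    IntegrableOn (fun x => f x * g x) E volume ∧
      ∫⁻ x in E, ‖f x * g x‖₊ ≤ 4 * vNormE E p f * vNormE E p' g := by
  set A := vNormE E p f with hA
  set B := vNormE E p' g with hB
  have hkey : ∀ u v : ℝ≥0∞, A < u → u ≠ ⊤ → B < v → v ≠ ⊤ →
      (∫⁻ x in E, (‖f x * g x‖₊ : ℝ≥0∞)) ≤ 4 * u * v := by
    intro u v h1 h2 h3 h4
    have hu0 : u ≠ 0 := (lt_of_le_of_lt (zero_le) h1).ne'
    have hv0 : v ≠ 0 := (lt_of_le_of_lt (zero_le) h3).ne'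
    exact holder_key E hE p p' hp hp' hconj f g hf hg hu0 h2 hv0 h4
      (modE_le_one_of_lt h1) (modE_le_one_of_lt h3)
  have hseq : ∀ n : ℕ, (∫⁻ x in E, (‖f x * g x‖₊ : ℝ≥0∞)) ≤
      4 * (A + ((n : ℝ≥0∞) + 1)⁻¹) * (B + ((n : ℝ≥0∞) + 1)⁻¹) := by
    intro n
    have hne : ((n : ℝ≥0∞) + 1)⁻¹ ≠ 0 := by
      simp [ENNReal.inv_ne_zero]
    have hnet : ((n : ℝ≥0∞) + 1)⁻¹ ≠ ⊤ := by
      simp [ENNReal.inv_ne_top]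
    exact hkey _ _ (ENNReal.lt_add_right hfLp.ne hne)
      (ENNReal.add_ne_top.2 ⟨hfLp.ne, hnet⟩)
      (ENNReal.lt_add_right hgLp.ne hne)
      (ENNReal.add_ne_top.2 ⟨hgLp.ne, hnet⟩)
  have h0 : Filter.Tendsto (fun n : ℕ => ((n : ℝ≥0∞) + 1)⁻¹) Filter.atTop (nhds 0) := by
    have := ENNReal.tendsto_inv_nat_nhds_zero.comp (Filter.tendsto_add_atTop_nat 1)
    refine this.congr fun n => ?_
    simp only [Function.comp_apply]
    push_cast
    ring_nf
  have hAlim : Filter.Tendsto (fun n : ℕ => A + ((n : ℝ≥0∞) + 1)⁻¹) Filter.atTop (nhds A) := by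
    simpa using (tendsto_const_nhds (x := A)).add h0
  have hBlim : Filter.Tendsto (fun n : ℕ => B + ((n : ℝ≥0∞) + 1)⁻¹) Filter.atTop (nhds B) := by
    simpa using (tendsto_const_nhds (x := B)).add h0
  have h4A : Filter.Tendsto (fun n : ℕ => 4 * (A + ((n : ℝ≥0∞) + 1)⁻¹)) Filter.atTop
      (nhds (4 * A)) :=
    ENNReal.Tendsto.const_mul hAlim (Or.inr (by simp))
  have hlim : Filter.Tendsto
      (fun n : ℕ => 4 * (A + ((n : ℝ≥0∞) + 1)⁻¹) * (B + ((n : ℝ≥0∞) + 1)⁻¹)) Filter.atTop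
      (nhds (4 * A * B)) := by
    refine ENNReal.Tendsto.mul h4A ?_ hBlim ?_
    · exact Or.inr hgLp.ne
    · exact Or.inr (ENNReal.mul_ne_top (by simp) hfLp.ne)
  have hfinal : (∫⁻ x in E, (‖f x * g x‖₊ : ℝ≥0∞)) ≤ 4 * A * B :=
    ge_of_tendsto' hlim hseq
  refine ⟨⟨(hf.mul hg).aestronglyMeasurable, ?_⟩, hfinal⟩
  have hlt : 4 * A * B < ⊤ :=
    ENNReal.mul_lt_top (ENNReal.mul_lt_top (by simp) hfLp) hgLp
  calc (∫⁻ x in E, (‖f x * g x‖₊ : ℝ≥0∞)) ≤ 4 * A * B := hfinal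
    _ < ⊤ := hlt
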